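/- The algebra Mₙ(ℂ) ⊗ Mₙ(ℂ) is generated as the basic construction ⟨Mₙ(ℂ) ⊗ 1, e⟩: the complex linear span of the set of matrices {(a ⊗ₖ 1) * e * (b ⊗ₖ 1) : a, b ∈ Mₙ(ℂ)} is all of Matrix (Fin n × Fin n) (Fin n × Fin n) ℂ. -/

import Mathlib

open Matrix
open scoped Kronecker

theorem kron_key (n : ℕ) (i p q j p' q' : Fin n) :
    (Matrix.single i p (1:ℂ) ⊗ₖ (1 : Matrix (Fin n) (Fin n) ℂ)) *
      (Matrix.single p' q' 1 ⊗ₖ Matrix.single p' q' 1) *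
      (Matrix.single q j 1 ⊗ₖ (1 : Matrix (Fin n) (Fin n) ℂ)) =
    if p = p' ∧ q = q' then Matrix.single i j 1 ⊗ₖ Matrix.single p q 1 else 0 := by
  rw [← Matrix.mul_kronecker_mul, ← Matrix.mul_kronecker_mul]
  simp only [one_mul, mul_one]
  by_cases h1 : p = p'
  · subst h1
    rw [single_mul_single_same]
    by_cases h2 : q = q'
    · subst h2; rw [single_mul_single_same]; simp
    · rw [single_mul_single_of_ne (h := Ne.symm h2)]; simp [h2]
  · rw [single_mul_single_of_ne (h := h1), Matrix.zero_mul]; simp [h1]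

theorem kron_std (n : ℕ) (i p j q : Fin n) :
    (Matrix.single i j (1:ℂ)) ⊗ₖ (Matrix.single p q (1:ℂ)) =
      Matrix.single ((i, p) : Fin n × Fin n) (j, q) (1:ℂ) := by
  ext ⟨a, b⟩ ⟨c, d⟩
  simp only [Matrix.kroneckerMap_apply, Matrix.single, Matrix.of_apply,
    Prod.mk.injEq]
  by_cases h1 : i = a ∧ j = c <;> by_cases h2 : p = b ∧ q = d <;>
    simp [h1, h2] <;> first | tauto | rw [if_neg (by tauto)]

/-- The basic construction `⟨Mₙ(ℂ) ⊗ 1, e⟩` is all of `Mₙ(ℂ) ⊗ Mₙ(ℂ)`: the complex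
linear span of `{(a ⊗ₖ 1) * e * (b ⊗ₖ 1) : a, b ∈ Mₙ(ℂ)}` is all of
`Matrix (Fin n × Fin n) (Fin n × Fin n) ℂ`. -/
theorem basic_construction_spans
    (n : ℕ) (hn : 1 ≤ n) (lam : Fin n → ℝ)
    (hpos : ∀ i, 0 < lam i) (hsum : ∑ i, lam i = 1)
    (E : Fin n → Fin n → Matrix (Fin n) (Fin n) ℂ)
    (hE : ∀ i j, E i j = Matrix.single i j (1 : ℂ))
    (e : Matrix (Fin n × Fin n) (Fin n × Fin n) ℂ)
    (he : e = ∑ i, ∑ j, ((Real.sqrt (lam i * lam j) : ℝ) : ℂ) • (E i j ⊗ₖ E i j)) :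
    Submodule.span ℂ
        {m : Matrix (Fin n × Fin n) (Fin n × Fin n) ℂ |
          ∃ a b : Matrix (Fin n) (Fin n) ℂ,
            m = (a ⊗ₖ (1 : Matrix (Fin n) (Fin n) ℂ)) * e *
                  (b ⊗ₖ (1 : Matrix (Fin n) (Fin n) ℂ))} = ⊤ := by
  set S : Set (Matrix (Fin n × Fin n) (Fin n × Fin n) ℂ) :=
    {m | ∃ a b : Matrix (Fin n) (Fin n) ℂ,
      m = (a ⊗ₖ (1 : Matrix (Fin n) (Fin n) ℂ)) * e *
            (b ⊗ₖ (1 : Matrix (Fin n) (Fin n) ℂ))} with hS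
  have hne : ∀ p q : Fin n, ((Real.sqrt (lam p * lam q) : ℝ) : ℂ) ≠ 0 := fun p q =>
    Complex.ofReal_ne_zero.mpr
      (ne_of_gt (Real.sqrt_pos.mpr (mul_pos (hpos p) (hpos q))))
  have hmul : ∀ i p j q : Fin n,
      (Matrix.single i p (1:ℂ) ⊗ₖ (1 : Matrix (Fin n) (Fin n) ℂ)) * e *
        (Matrix.single q j 1 ⊗ₖ (1 : Matrix (Fin n) (Fin n) ℂ)) =
      ((Real.sqrt (lam p * lam q) : ℝ) : ℂ) •
        (Matrix.single i j 1 ⊗ₖ Matrix.single p q 1) := by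
    intro i p j q
    simp only [he, hE]
    rw [Finset.mul_sum, Finset.sum_mul]
    rw [Finset.sum_eq_single p]
    · rw [Finset.mul_sum, Finset.sum_mul, Finset.sum_eq_single q]
      · rw [mul_smul_comm, smul_mul_assoc, kron_key]
        simp
      · intro q' _ hq'
        rw [mul_smul_comm, smul_mul_assoc, kron_key]
        simp [Ne.symm hq']
      · intro h; exact absurd (Finset.mem_univ q) h
    · intro p' _ hp'
      rw [Finset.mul_sum, Finset.sum_mul]
      refine Finset.sum_eq_zero fun q' _ => ?_
      rw [mul_smul_comm, smul_mul_assoc, kron_key]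
      simp [Ne.symm hp']
    · intro h; exact absurd (Finset.mem_univ p) h
  have hbasis : ∀ (ij kl : Fin n × Fin n),
      Matrix.single ij kl (1:ℂ) ∈ Submodule.span ℂ S := by
    rintro ⟨i, p⟩ ⟨j, q⟩
    have hmem : (Matrix.single i p (1:ℂ) ⊗ₖ (1 : Matrix (Fin n) (Fin n) ℂ)) * e *
        (Matrix.single q j 1 ⊗ₖ (1 : Matrix (Fin n) (Fin n) ℂ)) ∈ Submodule.span ℂ S :=
      Submodule.subset_span ⟨Matrix.single i p 1, Matrix.single q j 1, rfl⟩
    rw [hmul] at hmem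
    have := Submodule.smul_mem (Submodule.span ℂ S)
      (((Real.sqrt (lam p * lam q) : ℝ) : ℂ)⁻¹) hmem
    rw [smul_smul, inv_mul_cancel₀ (hne p q), one_smul, kron_std] at this
    exact this
  rw [eq_top_iff]
  rintro m -
  rw [Matrix.matrix_eq_sum_single m]
  refine Submodule.sum_mem _ fun ij _ => Submodule.sum_mem _ fun kl _ => ?_
  have : Matrix.single ij kl (m ij kl) = (m ij kl) • Matrix.single ij kl (1:ℂ) := by
    rw [smul_single, smul_eq_mul, mul_one]
  rw [this]
  exact Submodule.smul_mem _ _ (hbasis ij kl)
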